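/- Let ξ > 0, K ≥ 0, and define F(S) = S·ψ(ξS) + (W − S)·ψ(ξ(W − S)/(K+1)) for S ∈ (0, W), where ψ(u) = u + φ(u)/Φ(u). Then S = W/(K+2) satisfies the first-order condition F'(S) = 0, and at this point F(W/(K+2)) = W·ψ(ξW/(K+2)). -/

import Mathlib

open MeasureTheory ProbabilityTheory Real

noncomputable def stdPDF (u : ℝ) : ℝ := (Real.sqrt (2 * Real.pi))⁻¹ * Real.exp (-u ^ 2 / 2)

noncomputable def stdCDF (u : ℝ) : ℝ := ∫ t in Set.Iic u, stdPDF t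

noncomputable def psi (u : ℝ) : ℝ := u + stdPDF u / stdCDF u

lemma stdPDF_pos (u : ℝ) : 0 < stdPDF u := by
  unfold stdPDF; positivity

lemma stdPDF_integrable : Integrable stdPDF := by
  have h : stdPDF = fun u => (Real.sqrt (2 * Real.pi))⁻¹ * Real.exp (-(1/2) * u ^ 2) := by
    funext u; unfold stdPDF; ring_nf
  rw [h]
  exact (integrable_exp_neg_mul_sq (by norm_num : (0:ℝ) < 1/2)).const_mul _

lemma stdPDF_continuous : Continuous stdPDF := by
  unfold stdPDF; fun_prop

lemma stdCDF_pos (u : ℝ) : 0 < stdCDF u := by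
  unfold stdCDF
  rw [setIntegral_pos_iff_support_of_nonneg_ae
    (by filter_upwards with x using (stdPDF_pos x).le) stdPDF_integrable.integrableOn]
  have hs : Function.support stdPDF = Set.univ := by
    ext x; simp [Function.support, (stdPDF_pos x).ne']
  rw [hs, Set.univ_inter]
  simp [Real.volume_Iic]

lemma hasDerivAt_stdCDF (u : ℝ) : HasDerivAt stdCDF (stdPDF u) u := by
  have h : stdCDF = fun x => stdCDF 0 + ∫ t in (0:ℝ)..x, stdPDF t := by
    funext x
    rw [← intervalIntegral.integral_Iic_sub_Iic stdPDF_integrable.integrableOn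
      stdPDF_integrable.integrableOn]
    unfold stdCDF; ring
  rw [h]
  exact HasDerivAt.const_add _
    (intervalIntegral.integral_hasDerivAt_right
      stdPDF_integrable.intervalIntegrable
      stdPDF_continuous.aestronglyMeasurable.stronglyMeasurableAtFilter
      stdPDF_continuous.continuousAt)

lemma psi_differentiableAt (u : ℝ) : DifferentiableAt ℝ psi u := by
  have hcdf := (hasDerivAt_stdCDF u).differentiableAt
  have hpdf : DifferentiableAt ℝ stdPDF u := by unfold stdPDF; fun_prop
  unfold psi
  exact differentiableAt_id.add (hpdf.div hcdf (stdCDF_pos u).ne')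

/-- `S = W/(K+2)` satisfies the first-order condition for
`F(S) = S·ψ(ξS) + (W - S)·ψ(ξ(W - S)/(K + 1))`, and there `F = W·ψ(ξW/(K+2))`. -/
theorem optimal_trade_linear_rule (W ξ : ℝ) (hW : 0 < W) (hξ : 0 < ξ) (K : ℕ) :
    HasDerivAt
        (fun S : ℝ => S * psi (ξ * S) + (W - S) * psi (ξ * (W - S) / ((K : ℝ) + 1))) 0
        (W / ((K : ℝ) + 2)) ∧
      (W / ((K : ℝ) + 2)) * psi (ξ * (W / ((K : ℝ) + 2))) +
          (W - W / ((K : ℝ) + 2)) * psi (ξ * (W - W / ((K : ℝ) + 2)) / ((K : ℝ) + 1)) =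
        W * psi (ξ * W / ((K : ℝ) + 2)) := by
  set c : ℝ := (K : ℝ) + 1 with hc
  have hc0 : (0:ℝ) < c := by positivity
  have hK2 : ((K : ℝ) + 2) ≠ 0 := by positivity
  set S₀ : ℝ := W / ((K : ℝ) + 2) with hS0
  set u₀ : ℝ := ξ * S₀ with hu0
  have harg : ξ * (W - S₀) / c = u₀ := by
    rw [hu0, hS0, hc]
    field_simp
    ring
  have harg2 : ξ * W / ((K : ℝ) + 2) = u₀ := by
    rw [hu0, hS0]; field_simp
  constructor
  · set D : ℝ := deriv psi u₀ with hD
    have hψ : HasDerivAt psi D u₀ := (psi_differentiableAt u₀).hasDerivAt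
    -- first term
    have h1 : HasDerivAt (fun S : ℝ => S * psi (ξ * S))
        (1 * psi u₀ + S₀ * (D * ξ)) S₀ := by
      have hinner : HasDerivAt (fun S : ℝ => ξ * S) ξ S₀ := by
        simpa using (hasDerivAt_id S₀).const_mul ξ
      have := ((show HasDerivAt psi D (ξ * S₀) from hψ).comp S₀ hinner)
      exact (hasDerivAt_id S₀).mul this
    have h2 : HasDerivAt (fun S : ℝ => (W - S) * psi (ξ * (W - S) / c))
        ((-1) * psi u₀ + (W - S₀) * (D * (-ξ / c))) S₀ := by
      have hlin : HasDerivAt (fun S : ℝ => W - S) (-1) S₀ := by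
        have := (hasDerivAt_const S₀ W).sub (hasDerivAt_id S₀); rw [zero_sub] at this; exact this
      have hinner : HasDerivAt (fun S : ℝ => ξ * (W - S) / c) (-ξ / c) S₀ := by
        have : HasDerivAt (fun S : ℝ => ξ * (W - S) / c) (ξ * (-1) / c) S₀ :=
          ((hlin.const_mul ξ).div_const c)
        simpa [neg_div, mul_comm] using this
      have hψ' : HasDerivAt psi D (ξ * (W - S₀) / c) := harg ▸ hψ
      have hcomp := hψ'.comp S₀ hinner
      have hres := hlin.mul hcomp
      simp only [Function.comp] at hres
      rw [harg] at hres
      exact hres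
    have hsum := h1.add h2
    have hzero : (1 * psi u₀ + S₀ * (D * ξ)) + ((-1) * psi u₀ + (W - S₀) * (D * (-ξ / c))) = 0 := by
      have hWS : (W - S₀) / c = S₀ := by
        rw [hS0, hc]; field_simp; ring
      have key : (W - S₀) * (D * (-ξ / c)) = -(S₀ * (D * ξ)) := by
        calc (W - S₀) * (D * (-ξ / c)) = ((W - S₀) / c) * (D * (-ξ)) := by ring
          _ = S₀ * (D * (-ξ)) := by rw [hWS]
          _ = -(S₀ * (D * ξ)) := by ring
      rw [key]; ring
    rw [hzero] at hsum
    exact hsum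
  · rw [harg, harg2]
    ring
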